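/- Let (Y,m) be a premetric space whose generated topology τ_m has unique sequential limits. Then every sequence that τ_m-converges to a point y also m-converges to y (i.e., m(y, x_n) → 0). -/

import Mathlib

open scoped NNReal

/-- ε-δ continuity between premetric spaces. -/
def IsEDContinuous {X Y : Type*} (d : X → X → ℝ≥0) (m : Y → Y → ℝ≥0) (f : X → Y) : Prop :=
  ∀ x : X, ∀ ε : ℝ≥0, 0 < ε → ∃ δ : ℝ≥0, 0 < δ ∧ ∀ x', d x x' < δ → m (f x) (f x') < ε

/-- Topology generated by a premetric. -/
def premetricTopology {X : Type*} (d : X → X → ℝ≥0) : TopologicalSpace X where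
  IsOpen U := ∀ x ∈ U, ∃ ε : ℝ≥0, 0 < ε ∧ ∀ y, d x y < ε → y ∈ U
  isOpen_univ := fun _ _ => ⟨1, one_pos, fun _ _ => trivial⟩
  isOpen_inter := by
    rintro s t hs ht x ⟨hxs, hxt⟩
    obtain ⟨ε₁, hε₁, h₁⟩ := hs x hxs
    obtain ⟨ε₂, hε₂, h₂⟩ := ht x hxt
    exact ⟨min ε₁ ε₂, lt_min hε₁ hε₂, fun y hy =>
      ⟨h₁ y (hy.trans_le (min_le_left _ _)), h₂ y (hy.trans_le (min_le_right _ _))⟩⟩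
  isOpen_sUnion := by
    rintro S hS x ⟨s, hsS, hxs⟩
    obtain ⟨ε, hε, h⟩ := hS s hsS x hxs
    exact ⟨ε, hε, fun y hy => ⟨s, hsS, h y hy⟩⟩


/-- m-convergence implies topological convergence for a premetric topology. -/
lemma mconv_tendsto_premetric {Y : Type*} (m : Y → Y → ℝ≥0) (u : ℕ → Y) (a : Y)
    (h : ∀ ε : ℝ≥0, 0 < ε → ∀ᶠ n in Filter.atTop, m a (u n) < ε) :
    Filter.Tendsto u Filter.atTop (@nhds Y (premetricTopology m) a) := by
  letI := premetricTopology m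
  rw [tendsto_nhds]
  intro U hU haU
  obtain ⟨δ, hδ, hball⟩ := hU a haU
  filter_upwards [h δ hδ] with n hn using hball _ hn

/-- From unique limits: the premetric separates points. -/
lemma m_sep {Y : Type*} (m : Y → Y → ℝ≥0) (hm : ∀ y, m y y = 0)
    (huniq : ∀ (x : ℕ → Y) (a b : Y),
      Filter.Tendsto x Filter.atTop (@nhds Y (premetricTopology m) a) →
      Filter.Tendsto x Filter.atTop (@nhds Y (premetricTopology m) b) → a = b)
    {a b : Y} (h : m a b = 0) : a = b := by
  letI := premetricTopology m
  refine huniq (fun _ => b) a b ?_ tendsto_const_nhds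
  exact mconv_tendsto_premetric m _ a (fun ε hε => Filter.Eventually.of_forall fun n => by
    simpa [h] using hε)

theorem tendsto_implies_mconv_of_unique_limits {Y : Type*}
    (m : Y → Y → ℝ≥0) (hm : ∀ y, m y y = 0)
    (huniq : ∀ (x : ℕ → Y) (a b : Y),
      Filter.Tendsto x Filter.atTop (@nhds Y (premetricTopology m) a) →
      Filter.Tendsto x Filter.atTop (@nhds Y (premetricTopology m) b) → a = b) :
    ∀ (x : ℕ → Y) (y : Y),
      Filter.Tendsto x Filter.atTop (@nhds Y (premetricTopology m) y) →
      ∀ ε : ℝ≥0, 0 < ε → ∃ N, ∀ n ≥ N, m y (x n) < ε := by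
  classical
  intro x y hx ε hε
  by_contra hcon
  push_neg at hcon
  obtain ⟨φ, hφ, hz⟩ := Filter.extraction_of_frequently_atTop
    (Filter.frequently_atTop.2 hcon)
  set z : ℕ → Y := x ∘ φ with hzdef
  have hzy : Filter.Tendsto z Filter.atTop (@nhds Y (premetricTopology m) y) :=
    hx.comp hφ.tendsto_atTop
  have hzfar : ∀ k, ε ≤ m y (z k) := fun k => hz k
  -- key: around every point there's a ball meeting z only at the point itself
  have key : ∀ w : Y, ∃ δ : ℝ≥0, 0 < δ ∧ ∀ k, m w (z k) < δ → z k = w := by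
    intro w
    by_cases h : ∃ δ : ℝ≥0, 0 < δ ∧ ∃ N, ∀ k ≥ N, δ ≤ m w (z k)
    · obtain ⟨δ, hδ, N, hN⟩ := h
      set F := (Finset.range N).filter (fun k => z k ≠ w) with hF
      by_cases hFne : F.Nonempty
      · refine ⟨min δ (F.inf' hFne fun k => m w (z k)), ?_, ?_⟩
        · refine lt_min hδ ?_
          rw [Finset.lt_inf'_iff]
          intro k hk
          have hkw : z k ≠ w := (Finset.mem_filter.1 hk).2
          rcases eq_or_lt_of_le (zero_le : (0 : ℝ≥0) ≤ m w (z k)) with h0 | h0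
          · exact absurd (m_sep m hm huniq h0.symm).symm hkw
          · exact h0
        · intro k hk
          by_contra hne
          rcases lt_or_ge k N with h1 | h1
          · have hkF : k ∈ F := Finset.mem_filter.2 ⟨Finset.mem_range.2 h1, hne⟩
            exact absurd (Finset.inf'_le (fun k => m w (z k)) hkF)
              (not_le.2 (hk.trans_le (min_le_right _ _)))
          · exact absurd (hN k h1) (not_le.2 (hk.trans_le (min_le_left _ _)))
      · refine ⟨δ, hδ, fun k hk => ?_⟩
        rcases lt_or_ge k N with h1 | h1
        · by_contra hne
          exact hFne ⟨k, Finset.mem_filter.2 ⟨Finset.mem_range.2 h1, hne⟩⟩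
        · exact absurd (hN k h1) (not_le.2 hk)
    · push_neg at h
      exfalso
      -- z is frequently m-close to w, so a subsequence m-converges to w, hence w = y
      have hfreq : ∀ n : ℕ, ∃ᶠ k in Filter.atTop, m w (z k) < ((n : ℝ≥0) + 1)⁻¹ := by
        intro n
        refine Filter.frequently_atTop.2 fun N => ?_
        exact h _ (by positivity) N
      obtain ⟨ψ, hψ, hψclose⟩ := Filter.extraction_forall_of_frequently hfreq
      have hwconv : Filter.Tendsto (z ∘ ψ) Filter.atTop (@nhds Y (premetricTopology m) w) := by
        refine mconv_tendsto_premetric m _ w fun ε' hε' => ?_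
        obtain ⟨M, hM⟩ := exists_nat_gt (ε' : ℝ≥0)⁻¹
        refine Filter.eventually_atTop.2 ⟨M, fun n hn => ?_⟩
        refine lt_of_lt_of_le (hψclose n) ?_
        have h1 : (ε' : ℝ≥0)⁻¹ ≤ (n : ℝ≥0) + 1 := by
          calc (ε' : ℝ≥0)⁻¹ ≤ M := le_of_lt hM
            _ ≤ (n : ℝ≥0) + 1 := by
                exact_mod_cast le_trans (Nat.cast_le.2 hn) (le_add_of_nonneg_right zero_le_one)
        calc ((n : ℝ≥0) + 1)⁻¹ ≤ ((ε' : ℝ≥0)⁻¹)⁻¹ := by gcongr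
          _ = ε' := inv_inv ε'
      have hyconv : Filter.Tendsto (z ∘ ψ) Filter.atTop (@nhds Y (premetricTopology m) y) :=
        hzy.comp hψ.tendsto_atTop
      have hwy : w = y := huniq _ _ _ hwconv hyconv
      obtain ⟨k, -, hk⟩ := h ε hε 0
      rw [hwy] at hk
      exact absurd (hzfar k) (not_le.2 hk)
  -- the complement of the range of z is open
  letI := premetricTopology m
  have hU : IsOpen {v : Y | ∀ k, z k ≠ v} := by
    intro v hv
    obtain ⟨δ, hδ, hδk⟩ := key v
    refine ⟨δ, hδ, fun u hu => ?_⟩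
    intro k hk
    exact hv k (hk ▸ hδk k (hk ▸ hu))
  have hyU : y ∈ {v : Y | ∀ k, z k ≠ v} := by
    intro k hk
    have := hzfar k
    rw [hk, hm] at this
    exact absurd this (not_le.2 hε)
  obtain ⟨k, hk⟩ := Filter.eventually_atTop.1 ((tendsto_nhds.1 hzy) _ hU hyU)
  exact hk k le_rfl k rfl
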